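/- arXiv:1905.13002 — 7 statements merged into one kernel-verified Lean document; each statement's English description precedes it below -/
import Mathlib

section
/- The binary operator ⊗ for Bayesian filtering is associative: for three pairs (f_i,g_i), (f_j,g_j), (f_k,g_k), where each f is a conditional density and each g a nonnegative function, we have [(f_i,g_i) ⊗ (f_j,g_j)] ⊗ (f_k,g_k) = (f_i,g_i) ⊗ [(f_j,g_j) ⊗ (f_k,g_k)], provided all appearing integrals are finite and nonzero. -/
open MeasureTheory
open scoped ENNReal

/-- `f`-component of the Bayesian filtering operator:
`f_{ij}(x∣z) = (∫ gⱼ(y) fⱼ(x∣y) fᵢ(y∣z) dy) / (∫ gⱼ(y) fᵢ(y∣z) dy)`. -/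
noncomputable def fOp {d : ℕ}
    (fi fj : (Fin d → ℝ) → (Fin d → ℝ) → ℝ≥0∞)
    (gj : (Fin d → ℝ) → ℝ≥0∞) :
    (Fin d → ℝ) → (Fin d → ℝ) → ℝ≥0∞ :=
  fun x z => (∫⁻ y, gj y * fj x y * fi y z) / (∫⁻ y, gj y * fi y z)

/-- `g`-component of the Bayesian filtering operator:
`g_{ij}(z) = gᵢ(z) ∫ gⱼ(y) fᵢ(y∣z) dy`. -/
noncomputable def gOp {d : ℕ}
    (fi : (Fin d → ℝ) → (Fin d → ℝ) → ℝ≥0∞)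
    (gi gj : (Fin d → ℝ) → ℝ≥0∞) :
    (Fin d → ℝ) → ℝ≥0∞ :=
  fun z => gi z * ∫⁻ y, gj y * fi y z

/-- **Associativity of the Bayesian filtering operator** `⊗` on pairs `(f,g)`,
where each `f` is a conditional density (`∫ f(y∣z) dy = 1`) and each `g` is
nonnegative measurable (formalized `ℝ≥0∞`-valued), assuming the appearing
normalizing integrals are positive and finite:
`[(fᵢ,gᵢ) ⊗ (fⱼ,gⱼ)] ⊗ (fₖ,gₖ) = (fᵢ,gᵢ) ⊗ [(fⱼ,gⱼ) ⊗ (fₖ,gₖ)]`. -/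
theorem filtering_operator_assoc {d : ℕ}
    (fi fj fk : (Fin d → ℝ) → (Fin d → ℝ) → ℝ≥0∞)
    (gi gj gk : (Fin d → ℝ) → ℝ≥0∞)
    (hfi : Measurable (Function.uncurry fi))
    (hfj : Measurable (Function.uncurry fj))
    (hfk : Measurable (Function.uncurry fk))
    (hgi : Measurable gi) (hgj : Measurable gj) (hgk : Measurable gk)
    (hni : ∀ z, ∫⁻ y, fi y z = 1)
    (hnj : ∀ z, ∫⁻ y, fj y z = 1)
    (hnk : ∀ z, ∫⁻ y, fk y z = 1)
    (hij0 : ∀ z, (∫⁻ y, gj y * fi y z) ≠ 0)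
    (hijT : ∀ z, (∫⁻ y, gj y * fi y z) ≠ ⊤)
    (hjk0 : ∀ z, (∫⁻ y, gk y * fj y z) ≠ 0)
    (hjkT : ∀ z, (∫⁻ y, gk y * fj y z) ≠ ⊤)
    (hD0 : ∀ z, (∫⁻ y, ∫⁻ y', gk y * gj y' * fj y y' * fi y' z) ≠ 0)
    (hDT : ∀ z, (∫⁻ y, ∫⁻ y', gk y * gj y' * fj y y' * fi y' z) ≠ ⊤) :
    fOp (fOp fi fj gj) fk gk = fOp fi (fOp fj fk gk) (gOp fj gj gk)
      ∧ gOp (fOp fi fj gj) (gOp fi gi gj) gk = gOp fi gi (gOp fj gj gk) := by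
  -- basic measurability facts
  have mfiz : ∀ z, Measurable fun y => fi y z := fun z =>
    hfi.comp (measurable_id.prodMk measurable_const)
  have mfjx : ∀ x, Measurable fun y => fj x y := fun x =>
    hfj.comp (measurable_const.prodMk measurable_id)
  have mfjy : ∀ y', Measurable fun y => fj y y' := fun y' =>
    hfj.comp (measurable_id.prodMk measurable_const)
  have mfkx : ∀ x, Measurable fun y => fk x y := fun x =>
    hfk.comp (measurable_const.prodMk measurable_id)
  -- Left-hand-side computation: integrating a weight against `fOp fi fj gj`.
  have main :
      ∀ z (c : (Fin d → ℝ) → ℝ≥0∞), Measurable c →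
        (∫⁻ y, c y * fOp fi fj gj y z)
          = (∫⁻ y, ∫⁻ y', c y * (gj y' * fj y y' * fi y' z))
              * (∫⁻ y', gj y' * fi y' z)⁻¹ := by
    intro z c hc
    have h1 : ∀ y, c y * fOp fi fj gj y z
        = (∫⁻ y', c y * (gj y' * fj y y' * fi y' z))
            * (∫⁻ y', gj y' * fi y' z)⁻¹ := by
      intro y
      rw [fOp, div_eq_mul_inv, ← mul_assoc,
        lintegral_const_mul (c y) (f := fun y' => gj y' * fj y y' * fi y' z)
          ((hgj.mul (mfjx y)).mul (mfiz z))]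
    simp_rw [h1]
    exact lintegral_mul_const' _ _ (by simp [hij0 z])
  -- Right-hand-side pointwise simplification.
  have mainR : ∀ x y', gOp fj gj gk y' * fOp fj fk gk x y'
      = gj y' * ∫⁻ y, gk y * fk x y * fj y y' := by
    intro x y'
    rw [gOp, fOp, mul_assoc, ENNReal.mul_div_cancel (hjk0 y') (hjkT y')]
  -- pulling weights inside the inner integral
  have mainR2 : ∀ z (h : (Fin d → ℝ) → (Fin d → ℝ) → ℝ≥0∞),
      (∀ y', Measurable fun y => h y y') →
      (∫⁻ y', (gj y' * ∫⁻ y, h y y') * fi y' z)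
        = ∫⁻ y', ∫⁻ y, gj y' * h y y' * fi y' z := by
    intro z h hh
    refine lintegral_congr fun y' => ?_
    rw [← lintegral_const_mul (gj y') (hh y'),
      ← lintegral_mul_const _ (f := fun y => gj y' * h y y') (measurable_const.mul (hh y'))]
  -- Tonelli swap
  have swap : ∀ (F : (Fin d → ℝ) → (Fin d → ℝ) → ℝ≥0∞),
      Measurable (Function.uncurry F) →
      (∫⁻ y, ∫⁻ y', F y y') = ∫⁻ y', ∫⁻ y, F y y' := fun F hF =>
    lintegral_lintegral_swap hF.aemeasurable
  -- measurability of the canonical double integrands (as uncurried functions)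
  have mF : ∀ (x z : Fin d → ℝ), Measurable (Function.uncurry fun y y' =>
      gj y' * (gk y * fk x y * fj y y') * fi y' z) := by
    intro x z
    exact ((hgj.comp measurable_snd).mul
      (((hgk.comp measurable_fst).mul
        (hfk.comp (measurable_const.prodMk measurable_fst))).mul
        (hfj.comp (measurable_fst.prodMk measurable_snd)))).mul
      (hfi.comp (measurable_snd.prodMk measurable_const))
  have mG : ∀ (z : Fin d → ℝ), Measurable (Function.uncurry fun y y' =>
      gj y' * (gk y * fj y y') * fi y' z) := by
    intro z
    exact ((hgj.comp measurable_snd).mul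
      ((hgk.comp measurable_fst).mul
        (hfj.comp (measurable_fst.prodMk measurable_snd)))).mul
      (hfi.comp (measurable_snd.prodMk measurable_const))
  -- RHS numerator as a canonical double integral
  have Rnum : ∀ x z, (∫⁻ y', gOp fj gj gk y' * fOp fj fk gk x y' * fi y' z)
      = ∫⁻ y, ∫⁻ y', (gk y * fk x y) * (gj y' * fj y y' * fi y' z) := by
    intro x z
    calc (∫⁻ y', gOp fj gj gk y' * fOp fj fk gk x y' * fi y' z)
        = ∫⁻ y', (gj y' * ∫⁻ y, gk y * fk x y * fj y y') * fi y' z := by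
          refine lintegral_congr fun y' => ?_; rw [mainR]
      _ = ∫⁻ y', ∫⁻ y, gj y' * (gk y * fk x y * fj y y') * fi y' z :=
          mainR2 z _ (fun y' => ((hgk.mul (mfkx x)).mul (mfjy y')))
      _ = ∫⁻ y, ∫⁻ y', gj y' * (gk y * fk x y * fj y y') * fi y' z :=
          (swap _ (mF x z)).symm
      _ = ∫⁻ y, ∫⁻ y', (gk y * fk x y) * (gj y' * fj y y' * fi y' z) :=
          lintegral_congr fun y => lintegral_congr fun y' => by ring
  -- RHS denominator as a canonical double integral
  have Rden : ∀ z, (∫⁻ y', gOp fj gj gk y' * fi y' z)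
      = ∫⁻ y, ∫⁻ y', gk y * (gj y' * fj y y' * fi y' z) := by
    intro z
    calc (∫⁻ y', gOp fj gj gk y' * fi y' z)
        = ∫⁻ y', (gj y' * ∫⁻ y, gk y * fj y y') * fi y' z := by
          refine lintegral_congr fun y' => ?_; rw [gOp]
      _ = ∫⁻ y', ∫⁻ y, gj y' * (gk y * fj y y') * fi y' z :=
          mainR2 z _ (fun y' => (hgk.mul (mfjy y')))
      _ = ∫⁻ y, ∫⁻ y', gj y' * (gk y * fj y y') * fi y' z :=
          (swap _ (mG z)).symm
      _ = ∫⁻ y, ∫⁻ y', gk y * (gj y' * fj y y' * fi y' z) :=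
          lintegral_congr fun y => lintegral_congr fun y' => by ring
  constructor
  · funext x z
    show (∫⁻ y, gk y * fk x y * fOp fi fj gj y z)
        / (∫⁻ y, gk y * fOp fi fj gj y z)
      = (∫⁻ y', gOp fj gj gk y' * fOp fj fk gk x y' * fi y' z)
        / (∫⁻ y', gOp fj gj gk y' * fi y' z)
    rw [main z (fun y => gk y * fk x y) (hgk.mul (mfkx x)), main z gk hgk,
      ENNReal.mul_div_mul_right _ _ (by simp [hijT z]) (by simp [hij0 z]),
      Rnum, Rden]
  · funext z
    show gOp fi gi gj z * (∫⁻ y, gk y * fOp fi fj gj y z)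
      = gi z * (∫⁻ y', gOp fj gj gk y' * fi y' z)
    rw [main z gk hgk, gOp, mul_mul_mul_comm,
      ENNReal.mul_inv_cancel (hij0 z) (hijT z), mul_one, Rden]
end

section
/- For the filtering operator ⊗, the combined likelihood factor satisfies g_{ijk}(z) = g_i(z) ∬ g_k(y) g_j(y') f_j(y|y') f_i(y'|z) dy' dy, and this equals the result obtained by either order of association. -/
open MeasureTheory
open scoped ENNReal

/-- **Combined likelihood factor of the filtering operator:**
`g_{ijk}(z) = gᵢ(z) ∬ gₖ(y) gⱼ(y') fⱼ(y∣y') fᵢ(y'∣z) dy' dy`,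
and this is obtained from either order of association. -/
theorem filtering_g_double_integral {d : ℕ}
    (fi fj fk : (Fin d → ℝ) → (Fin d → ℝ) → ℝ≥0∞)
    (gi gj gk : (Fin d → ℝ) → ℝ≥0∞)
    (hfi : Measurable (Function.uncurry fi))
    (hfj : Measurable (Function.uncurry fj))
    (hfk : Measurable (Function.uncurry fk))
    (hgi : Measurable gi) (hgj : Measurable gj) (hgk : Measurable gk)
    (hni : ∀ z, ∫⁻ y, fi y z = 1)
    (hnj : ∀ z, ∫⁻ y, fj y z = 1)
    (hnk : ∀ z, ∫⁻ y, fk y z = 1)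
    (hij0 : ∀ z, (∫⁻ y, gj y * fi y z) ≠ 0)
    (hijT : ∀ z, (∫⁻ y, gj y * fi y z) ≠ ⊤) :
    (∀ z, gOp (fOp fi fj gj) (gOp fi gi gj) gk z
        = gi z * ∫⁻ y, ∫⁻ y', gk y * gj y' * fj y y' * fi y' z)
    ∧ (∀ z, gOp fi gi (gOp fj gj gk) z
        = gi z * ∫⁻ y, ∫⁻ y', gk y * gj y' * fj y y' * fi y' z) := by
  have hmj : Measurable fun p : (Fin d → ℝ) × (Fin d → ℝ) => fj p.1 p.2 := hfj
  have hmi : Measurable fun p : (Fin d → ℝ) × (Fin d → ℝ) => fi p.1 p.2 := hfi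
  constructor
  · intro z
    simp only [gOp, fOp]
    have hmeas : ∀ y, Measurable fun y' => gj y' * fj y y' * fi y' z := by
      intro y
      exact ((hgj.mul (hmj.comp (measurable_const.prodMk measurable_id))).mul
        (hmi.comp (measurable_id.prodMk measurable_const)))
    have step1 : ∀ y, gk y * ((∫⁻ y', gj y' * fj y y' * fi y' z) / (∫⁻ y', gj y' * fi y' z))
        = (∫⁻ y', gk y * (gj y' * fj y y' * fi y' z)) * (∫⁻ y', gj y' * fi y' z)⁻¹ := by
      intro y
      rw [lintegral_const_mul (gk y) (hmeas y), div_eq_mul_inv, mul_assoc]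
    calc gi z * (∫⁻ y, gj y * fi y z) *
          ∫⁻ y, gk y * ((∫⁻ y', gj y' * fj y y' * fi y' z) / (∫⁻ y', gj y' * fi y' z))
        = gi z * (∫⁻ y, gj y * fi y z) *
          ((∫⁻ y, ∫⁻ y', gk y * (gj y' * fj y y' * fi y' z)) * (∫⁻ y, gj y * fi y z)⁻¹) := by
          simp only [step1]
          rw [lintegral_mul_const' _ _ (by simpa using hij0 z)]
      _ = gi z * ∫⁻ y, ∫⁻ y', gk y * (gj y' * fj y y' * fi y' z) := by
          rw [mul_assoc, mul_comm ((∫⁻ y, ∫⁻ y', gk y * (gj y' * fj y y' * fi y' z))) _,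
            ← mul_assoc (∫⁻ y, gj y * fi y z), ENNReal.mul_inv_cancel (hij0 z) (hijT z), one_mul]
      _ = gi z * ∫⁻ y, ∫⁻ y', gk y * gj y' * fj y y' * fi y' z := by
          congr 1; refine lintegral_congr fun y => lintegral_congr fun y' => by ring
  · intro z
    simp only [gOp]
    have step1 : ∀ y', (gj y' * ∫⁻ y, gk y * fj y y') * fi y' z
        = ∫⁻ y, gk y * gj y' * fj y y' * fi y' z := by
      intro y'
      have hm : Measurable fun y => gk y * fj y y' :=
        hgk.mul (hmj.comp (measurable_id.prodMk measurable_const))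
      rw [← lintegral_const_mul (gj y') hm, ← lintegral_mul_const (f := fun y => gj y' * (gk y * fj y y')) _ (measurable_const.mul hm)]
      exact lintegral_congr fun y => by ring
    have hswap : (∫⁻ y', ∫⁻ y, gk y * gj y' * fj y y' * fi y' z)
        = ∫⁻ y, ∫⁻ y', gk y * gj y' * fj y y' * fi y' z := by
      rw [lintegral_lintegral_swap]
      exact (((hgk.comp measurable_snd).mul (hgj.comp measurable_fst)).mul
        (hmj.comp (measurable_snd.prodMk measurable_fst))
        |>.mul (hmi.comp (measurable_fst.prodMk measurable_const))).aemeasurable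
    simp only [step1]
    rw [hswap]
end

section
/- In a hidden Markov model, if a_k = p(x_k | y_{1:k}, x_{k+1}) for k < n and a_n = p(x_n | y_{1:n}), then the iterated smoothing composition satisfies a_k ⊗ a_{k+1} ⊗ ⋯ ⊗ a_n = p(x_k | y_{1:n}), where ⊗ is kernel composition (a_i ⊗ a_j)(x|z) = ∫ a_i(x|y) a_j(y|z) dy. -/
open Finset

/-- Unnormalized forward quantity of a discrete hidden Markov model with fixed
observations: `hmmAlpha init trans like k x = p(x_k = x, y_{1:k})`, where
`trans k z x = p(x_k = x ∣ x_{k-1} = z)` and `like k x = p(y_k ∣ x_k = x)`. -/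
def hmmAlpha {S : Type*} [Fintype S] (init : S → ℝ)
    (trans : ℕ → S → S → ℝ) (like : ℕ → S → ℝ) : ℕ → S → ℝ
  | 0, x => init x
  | k + 1, x => (∑ w, hmmAlpha init trans like k w * trans (k + 1) w x) * like (k + 1) x

/-- Backward quantity `hmmGamma trans like k l u v = p(y_{k+1:k+l}, x_{k+l+1} = v ∣ x_k = u)`. -/
def hmmGamma {S : Type*} [Fintype S]
    (trans : ℕ → S → S → ℝ) (like : ℕ → S → ℝ) : ℕ → ℕ → S → S → ℝ
  | k, 0, u, v => trans (k + 1) u v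
  | k, l + 1, u, v =>
      ∑ w, trans (k + 1) u w * like (k + 1) w * hmmGamma trans like (k + 1) l w v

/-- Backward likelihood `hmmBeta trans like k l u = p(y_{k+1:k+l} ∣ x_k = u)`. -/
def hmmBeta {S : Type*} [Fintype S]
    (trans : ℕ → S → S → ℝ) (like : ℕ → S → ℝ) : ℕ → ℕ → S → ℝ
  | _, 0, _ => 1
  | k, l + 1, u =>
      ∑ w, trans (k + 1) u w * like (k + 1) w * hmmBeta trans like (k + 1) l w

/-- Conditional density `p(x_k = u ∣ y_{1:m}, x_{m+1} = v)` (for `k ≤ m`). -/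
noncomputable def hmmCond {S : Type*} [Fintype S] (init : S → ℝ)
    (trans : ℕ → S → S → ℝ) (like : ℕ → S → ℝ) (k m : ℕ) (u v : S) : ℝ :=
  hmmAlpha init trans like k u * hmmGamma trans like k (m - k) u v /
    ∑ u', hmmAlpha init trans like k u' * hmmGamma trans like k (m - k) u' v

/-- Smoothing density `hmmSmooth init trans like n k u = p(x_k = u ∣ y_{1:n})`. -/
noncomputable def hmmSmooth {S : Type*} [Fintype S] (init : S → ℝ)
    (trans : ℕ → S → S → ℝ) (like : ℕ → S → ℝ) (n k : ℕ) (u : S) : ℝ :=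
  hmmAlpha init trans like k u * hmmBeta trans like k (n - k) u /
    ∑ u', hmmAlpha init trans like k u' * hmmBeta trans like k (n - k) u'

/-- The iterated smoothing composition `a_{n-l} ⊗ a_{n-l+1} ⊗ ⋯ ⊗ a_n`, where
`a_k(x∣z) = p(x_k = x ∣ y_{1:k}, x_{k+1} = z)` for `k < n`,
`a_n(x∣z) = p(x_n = x ∣ y_{1:n})`, and
`(a ⊗ b)(x∣z) = ∑_y a(x∣y) b(y∣z)` is kernel composition. -/
noncomputable def hmmSmoothFold {S : Type*} [Fintype S] (init : S → ℝ)
    (trans : ℕ → S → S → ℝ) (like : ℕ → S → ℝ) (n : ℕ) : ℕ → S → S → ℝ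
  | 0, x, _ => hmmSmooth init trans like n n x
  | l + 1, x, z =>
      ∑ y, hmmCond init trans like (n - (l + 1)) (n - (l + 1)) x y *
        hmmSmoothFold init trans like n l y z


section AuxSmoothing

variable {S : Type*} [Fintype S] [Nonempty S]
    (init : S → ℝ) (trans : ℕ → S → S → ℝ) (like : ℕ → S → ℝ)

theorem hmmAlpha_pos (hinit : ∀ x, 0 < init x)
    (htrans : ∀ n z x, 0 < trans n z x) (hlike : ∀ n x, 0 < like n x) :
    ∀ m u, 0 < hmmAlpha init trans like m u := by
  intro m
  induction m with
  | zero => intro u; simpa [hmmAlpha] using hinit u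
  | succ m ihm =>
    intro u
    exact mul_pos (Finset.sum_pos (fun w _ => mul_pos (ihm w) (htrans _ _ _))
      Finset.univ_nonempty) (hlike _ _)

theorem hmmBeta_pos (htrans : ∀ n z x, 0 < trans n z x) (hlike : ∀ n x, 0 < like n x) :
    ∀ li m u, 0 < hmmBeta trans like m li u := by
  intro li
  induction li with
  | zero => intro m u; simp [hmmBeta]
  | succ li ihli =>
    intro m u
    exact Finset.sum_pos (fun w _ => mul_pos (mul_pos (htrans _ _ _) (hlike _ _)) (ihli _ _))
      Finset.univ_nonempty

end AuxSmoothing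

/-- **Parallel smoothing theorem** (discrete hidden Markov model): with
`a_k = p(x_k ∣ y_{1:k}, x_{k+1})` for `k < n` and `a_n = p(x_n ∣ y_{1:n})`,
the iterated kernel composition satisfies
`a_k ⊗ a_{k+1} ⊗ ⋯ ⊗ a_n = p(x_k ∣ y_{1:n})` (here `k = n - l`). -/
theorem smoothing_prefix_composition {S : Type*} [Fintype S] [Nonempty S]
    (init : S → ℝ) (trans : ℕ → S → S → ℝ) (like : ℕ → S → ℝ)
    (hinit : ∀ x, 0 < init x)
    (htrans : ∀ n z x, 0 < trans n z x)
    (hlike : ∀ n x, 0 < like n x)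
    (hinit1 : ∑ x, init x = 1)
    (htrans1 : ∀ n z, ∑ x, trans n z x = 1)
    (n l : ℕ) (hl : l ≤ n) :
    ∀ x z, hmmSmoothFold init trans like n l x z
      = hmmSmooth init trans like n (n - l) x := by
  induction l with
  | zero => intro x z; simp [hmmSmoothFold]
  | succ l ih =>
    intro x z
    have hln : l ≤ n := by omega
    have ih' := ih hln
    set k := n - (l + 1) with hk
    have hk1 : n - l = k + 1 := by omega
    have hnk : n - (k + 1) = l := by omega
    have hnk2 : n - k = l + 1 := by omega
    have halpha := hmmAlpha_pos init trans like hinit htrans hlike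
    have hbeta := hmmBeta_pos trans like htrans hlike
    -- abbreviations
    set A : ℕ → S → ℝ := hmmAlpha init trans like with hA
    set T : S → S → ℝ := trans (k + 1) with hT
    set L : S → ℝ := like (k + 1) with hL
    set B : S → ℝ := hmmBeta trans like (k + 1) l with hB
    have hDpos : ∀ y, (0:ℝ) < ∑ w, A k w * T w y := fun y =>
      Finset.sum_pos (fun w _ => mul_pos (halpha _ _) (htrans _ _ _)) Finset.univ_nonempty
    have hAk1 : ∀ y, A (k + 1) y = (∑ w, A k w * T w y) * L y := fun y => rfl
    set Z : ℝ := ∑ y, A (k + 1) y * B y with hZ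
    have hZpos : 0 < Z :=
      Finset.sum_pos (fun y _ => mul_pos (halpha _ _) (hbeta _ _ _)) Finset.univ_nonempty
    have hBk : ∀ u, hmmBeta trans like k (l + 1) u = ∑ y, T u y * L y * B y := fun u => rfl
    have hsmooth : ∀ y, hmmSmooth init trans like n (k + 1) y = A (k + 1) y * B y / Z := by
      intro y
      simp only [hmmSmooth, hnk, ← hA, ← hB, ← hZ]
    have hcond : ∀ y, hmmCond init trans like k k x y = A k x * T x y / ∑ w, A k w * T w y := by
      intro y
      simp only [hmmCond, Nat.sub_self, hmmGamma, ← hA, ← hT]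
    have hZ' : Z = ∑ u, A k u * hmmBeta trans like k (l + 1) u := by
      simp only [hZ, hAk1, hBk, Finset.sum_mul, Finset.mul_sum]
      rw [Finset.sum_comm]
      apply Finset.sum_congr rfl
      intro y _
      apply Finset.sum_congr rfl
      intro w _
      ring
    have key : ∑ y, hmmCond init trans like k k x y * hmmSmooth init trans like n (k + 1) y
        = hmmSmooth init trans like n k x := by
      have hterm : ∀ y, hmmCond init trans like k k x y * hmmSmooth init trans like n (k + 1) y
          = A k x * (T x y * L y * B y) / Z := by
        intro y
        rw [hcond y, hsmooth y, hAk1 y]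
        have hD := (hDpos y).ne'
        field_simp
      simp only [hterm, ← Finset.sum_div, ← Finset.mul_sum]
      rw [← hBk]
      simp only [hmmSmooth, hnk2, ← hA, ← hZ']
    calc hmmSmoothFold init trans like n (l + 1) x z
        = ∑ y, hmmCond init trans like k k x y * hmmSmoothFold init trans like n l y z := rfl
      _ = ∑ y, hmmCond init trans like k k x y * hmmSmooth init trans like n (k + 1) y := by
          simp only [ih', hk1]
      _ = hmmSmooth init trans like n k x := key
end

section
/- In a hidden Markov model, if each filtering element is a_k = (p(x_k | y_k, x_{k-1}), p(y_k | x_{k-1})) with the convention p(x_1 | y_1, x_0) = p(x_1 | y_1) and p(y_1 | x_0) = p(y_1), then the k-th prefix sum under the filtering operator ⊗ equals (p(x_k | y_{1:k}), p(y_{1:k})), i.e., a_1 ⊗ a_2 ⊗ ⋯ ⊗ a_k produces the exact Bayesian filtering density and the marginal likelihood of the observations. -/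
open Finset

/-- The Bayesian filtering operator `⊗` on pairs `(f, g)`:
`f_{ij}(x∣z) = (∑_y gⱼ(y) fⱼ(x∣y) fᵢ(y∣z)) / (∑_y gⱼ(y) fᵢ(y∣z))` and
`g_{ij}(z) = gᵢ(z) ∑_y gⱼ(y) fᵢ(y∣z)`. -/
noncomputable def filtOp {S : Type*} [Fintype S]
    (a b : (S → S → ℝ) × (S → ℝ)) : (S → S → ℝ) × (S → ℝ) :=
  (fun x z => (∑ y, b.2 y * b.1 x y * a.1 y z) / (∑ y, b.2 y * a.1 y z),
   fun z => a.2 z * ∑ y, b.2 y * a.1 y z)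

/-- The filtering element `a_k = (p(x_k ∣ y_k, x_{k-1}), p(y_k ∣ x_{k-1}))`;
`filtElem init trans like k` represents `a_{k+1}`.  The first element uses the
convention `p(x_1 ∣ y_1, x_0) = p(x_1 ∣ y_1)`, `p(y_1 ∣ x_0) = p(y_1)`. -/
noncomputable def filtElem {S : Type*} [Fintype S] (init : S → ℝ)
    (trans : ℕ → S → S → ℝ) (like : ℕ → S → ℝ) :
    ℕ → (S → S → ℝ) × (S → ℝ)
  | 0 =>
      (fun x _ => hmmAlpha init trans like 1 x / ∑ x', hmmAlpha init trans like 1 x',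
       fun _ => ∑ x', hmmAlpha init trans like 1 x')
  | n + 1 =>
      (fun x z => trans (n + 2) z x * like (n + 2) x /
          ∑ x', trans (n + 2) z x' * like (n + 2) x',
       fun z => ∑ x', trans (n + 2) z x' * like (n + 2) x')

/-- Left-fold prefix `filtPrefix k = a_1 ⊗ a_2 ⊗ ⋯ ⊗ a_{k+1}`. -/
noncomputable def filtPrefix {S : Type*} [Fintype S] (init : S → ℝ)
    (trans : ℕ → S → S → ℝ) (like : ℕ → S → ℝ) : ℕ → (S → S → ℝ) × (S → ℝ)
  | 0 => filtElem init trans like 0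
  | k + 1 => filtOp (filtPrefix init trans like k) (filtElem init trans like (k + 1))

/-- **Parallel filtering theorem** (discrete hidden Markov model): the prefix
`a_1 ⊗ ⋯ ⊗ a_k` under the filtering operator equals
`(p(x_k ∣ y_{1:k}), p(y_{1:k}))` (here the prefix index is `k+1`). -/
theorem filtering_prefix_composition {S : Type*} [Fintype S] [Nonempty S]
    (init : S → ℝ) (trans : ℕ → S → S → ℝ) (like : ℕ → S → ℝ)
    (hinit : ∀ x, 0 < init x)
    (htrans : ∀ n z x, 0 < trans n z x)
    (hlike : ∀ n x, 0 < like n x)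
    (hinit1 : ∑ x, init x = 1)
    (htrans1 : ∀ n z, ∑ x, trans n z x = 1)
    (k : ℕ) :
    filtPrefix init trans like k
      = (fun x _ => hmmAlpha init trans like (k + 1) x /
            ∑ x', hmmAlpha init trans like (k + 1) x',
         fun _ => ∑ x', hmmAlpha init trans like (k + 1) x') := by
  have halpha : ∀ n x, 0 < hmmAlpha init trans like n x := by
    intro n
    induction n with
    | zero => exact hinit
    | succ m ih =>
      intro x
      exact mul_pos (Finset.sum_pos (fun w _ =>
        mul_pos (ih w) (htrans (m + 1) w x)) Finset.univ_nonempty) (hlike (m + 1) x)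
  induction k with
  | zero => rfl
  | succ k ih =>
    have hT : ∀ y, (0:ℝ) < ∑ x', trans (k + 2) y x' * like (k + 2) x' := fun y =>
      Finset.sum_pos (fun x' _ => mul_pos (htrans _ _ _) (hlike _ _)) Finset.univ_nonempty
    have hSA : (0:ℝ) < ∑ x', hmmAlpha init trans like (k + 1) x' :=
      Finset.sum_pos (fun x' _ => halpha _ _) Finset.univ_nonempty
    set A := hmmAlpha init trans like (k + 1) with hA
    set SA := ∑ x', hmmAlpha init trans like (k + 1) x' with hSAdef
    set t := trans (k + 2) with ht
    set l := like (k + 2) with hl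
    set T : S → ℝ := fun y => ∑ x', t y x' * l x' with hTdef
    -- rewrite the prefix using the induction hypothesis
    show filtOp (filtPrefix init trans like k) (filtElem init trans like (k + 1)) = _
    rw [ih]
    have hnum : ∀ x, (∑ y, T y * (t y x * l x / T y) * (A y / SA))
        = (∑ y, A y * t y x * l x) / SA := by
      intro x
      rw [Finset.sum_div]
      refine Finset.sum_congr rfl fun y _ => ?_
      field_simp [(hT y).ne']
      rw [div_eq_iff (show T y ≠ 0 from (hT y).ne')]
      ring
    have hden : (∑ y, T y * (A y / SA)) = (∑ y, A y * T y) / SA := by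
      rw [Finset.sum_div]
      exact Finset.sum_congr rfl fun y _ => by ring
    have hsum : (∑ x', (∑ w, A w * t w x') * l x') = ∑ y, A y * T y := by
      have : (∑ x', (∑ w, A w * t w x') * l x') = ∑ x', ∑ w, A w * (t w x' * l x') := by
        refine Finset.sum_congr rfl fun x' _ => ?_
        rw [Finset.sum_mul]
        exact Finset.sum_congr rfl fun w _ => by ring
      rw [this, Finset.sum_comm]
      refine Finset.sum_congr rfl fun y _ => ?_
      rw [hTdef, Finset.mul_sum]
    have halpha2 : ∀ x, hmmAlpha init trans like (k + 1 + 1) x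
        = (∑ w, A w * t w x) * l x := fun x => rfl
    refine Prod.ext ?_ ?_
    · funext x z
      show (∑ y, T y * (t y x * l x / T y) * (A y / SA)) / (∑ y, T y * (A y / SA))
          = hmmAlpha init trans like (k + 1 + 1) x /
            ∑ x', hmmAlpha init trans like (k + 1 + 1) x'
      rw [hnum, hden, div_div_div_cancel_right₀ hSA.ne']
      simp only [halpha2, hsum]
      congr 1
      rw [Finset.sum_mul]
    · funext z
      show SA * (∑ y, T y * (A y / SA)) = ∑ x', hmmAlpha init trans like (k + 1 + 1) x'
      rw [hden, mul_div_cancel₀ _ hSA.ne']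
      simp only [halpha2, hsum]
end

section
/- The induction step for parallel smoothing: in a hidden Markov model, ∫ p(x_k | y_{1:k+l-1}, x_{k+l}) p(x_{k+l} | y_{1:k+l}, x_{k+l+1}) dx_{k+l} = p(x_k | y_{1:k+l}, x_{k+l+1}). -/
open Finset

section aux
variable {S : Type*} [Fintype S] [Nonempty S]
  (init : S → ℝ) (trans : ℕ → S → S → ℝ) (like : ℕ → S → ℝ)

lemma alpha_pos (hinit : ∀ x, 0 < init x) (htrans : ∀ n z x, 0 < trans n z x)
    (hlike : ∀ n x, 0 < like n x) : ∀ n x, 0 < hmmAlpha init trans like n x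
  | 0, x => hinit x
  | n + 1, x => by
      rw [hmmAlpha]
      exact mul_pos (Finset.sum_pos
        (fun w _ => mul_pos (alpha_pos hinit htrans hlike n w) (htrans _ _ _))
        Finset.univ_nonempty) (hlike _ _)

lemma gamma_pos (htrans : ∀ n z x, 0 < trans n z x) (hlike : ∀ n x, 0 < like n x) :
    ∀ m k (u v : S), 0 < hmmGamma trans like k m u v
  | 0, _, _, _ => htrans _ _ _
  | m + 1, k, u, v => by
      rw [hmmGamma]
      exact Finset.sum_pos (fun w _ => mul_pos (mul_pos (htrans _ _ _) (hlike _ _))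
        (gamma_pos htrans hlike m (k+1) w v)) Finset.univ_nonempty

lemma sum_alpha_gamma (hlike : ∀ n x, 0 < like n x) :
    ∀ m k (v : S), ∑ u, hmmAlpha init trans like k u * hmmGamma trans like k m u v
      = hmmAlpha init trans like (k + m + 1) v / like (k + m + 1) v
  | 0, k, v => by
      simp only [hmmGamma, Nat.add_zero]
      rw [show hmmAlpha init trans like (k+1) v
          = (∑ w, hmmAlpha init trans like k w * trans (k + 1) w v) * like (k + 1) v from rfl,
        mul_div_assoc, div_self (hlike (k+1) v).ne', mul_one]
  | m + 1, k, v => by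
      simp only [hmmGamma, Finset.mul_sum]
      rw [Finset.sum_comm]
      have step : ∀ w, ∑ x, hmmAlpha init trans like k x *
            (trans (k+1) x w * like (k+1) w * hmmGamma trans like (k+1) m w v)
          = hmmAlpha init trans like (k+1) w * hmmGamma trans like (k+1) m w v := by
        intro w
        rw [show hmmAlpha init trans like (k+1) w
            = (∑ x, hmmAlpha init trans like k x * trans (k + 1) x w) * like (k + 1) w from rfl,
          Finset.sum_mul, Finset.sum_mul]
        exact Finset.sum_congr rfl fun x _ => by ring
      rw [Finset.sum_congr rfl fun w _ => step w, sum_alpha_gamma hlike m (k+1) v,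
        show k + 1 + m + 1 = k + (m+1) + 1 by omega]

lemma gamma_succ :
    ∀ m k (u v : S), hmmGamma trans like k (m+1) u v
      = ∑ w, hmmGamma trans like k m u w * like (k + m + 1) w * trans (k + m + 2) w v
  | 0, k, u, v => by
      simp only [hmmGamma, Nat.add_zero]
  | m + 1, k, u, v => by
      rw [show hmmGamma trans like k (m+1+1) u v
          = ∑ w, trans (k + 1) u w * like (k + 1) w * hmmGamma trans like (k + 1) (m+1) w v
          from rfl]
      simp only [fun w => gamma_succ m (k+1) w v, Finset.mul_sum]
      rw [Finset.sum_comm]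
      have step : ∀ w2, ∑ w, trans (k+1) u w * like (k+1) w *
            (hmmGamma trans like (k+1) m w w2 * like (k+1+m+1) w2 * trans (k+1+m+2) w2 v)
          = hmmGamma trans like k (m+1) u w2 * like (k + (m+1) + 1) w2
              * trans (k + (m+1) + 2) w2 v := by
        intro w2
        rw [show hmmGamma trans like k (m+1) u w2
            = ∑ w, trans (k + 1) u w * like (k + 1) w * hmmGamma trans like (k + 1) m w w2
            from rfl, Finset.sum_mul, Finset.sum_mul,
          show k + (m+1) + 1 = k + 1 + m + 1 by omega,
          show k + (m+1) + 2 = k + 1 + m + 2 by omega]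
        exact Finset.sum_congr rfl fun w _ => by ring
      exact Finset.sum_congr rfl fun w2 _ => step w2

end aux

/-- **Induction step for parallel smoothing** (discrete hidden Markov model):
`∑_{x_{k+l}} p(x_k ∣ y_{1:k+l-1}, x_{k+l}) p(x_{k+l} ∣ y_{1:k+l}, x_{k+l+1})
 = p(x_k ∣ y_{1:k+l}, x_{k+l+1})`. -/
theorem smoothing_induction_step {S : Type*} [Fintype S] [Nonempty S]
    (init : S → ℝ) (trans : ℕ → S → S → ℝ) (like : ℕ → S → ℝ)
    (hinit : ∀ x, 0 < init x)
    (htrans : ∀ n z x, 0 < trans n z x)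
    (hlike : ∀ n x, 0 < like n x)
    (hinit1 : ∑ x, init x = 1)
    (htrans1 : ∀ n z, ∑ x, trans n z x = 1)
    (k l : ℕ) (hl : 1 ≤ l) (u v : S) :
    ∑ w, hmmCond init trans like k (k + l - 1) u w *
        hmmCond init trans like (k + l) (k + l) w v
      = hmmCond init trans like k (k + l) u v := by
  obtain ⟨m, rfl⟩ : ∃ m, l = m + 1 := ⟨l - 1, by omega⟩
  have hA := alpha_pos init trans like hinit htrans hlike
  have hG := gamma_pos trans like htrans hlike
  have h1 : k + (m + 1) - 1 = k + m := by omega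
  have h2 : k + m - k = m := by omega
  have h3 : k + (m + 1) - k = m + 1 := by omega
  have h4 : k + (m + 1) - (k + (m + 1)) = 0 := by omega
  simp only [hmmCond, h1, h2, h3, h4]
  simp only [show k + (m + 1) = k + m + 1 by omega]
  have hD1 : ∀ w : S, ∑ u', hmmAlpha init trans like k u' * hmmGamma trans like k m u' w
      = hmmAlpha init trans like (k + m + 1) w / like (k + m + 1) w :=
    fun w => sum_alpha_gamma init trans like hlike m k w
  set D : ℝ := hmmAlpha init trans like (k + m + 2) v / like (k + m + 2) v with hD
  have hDpos : 0 < D := div_pos (hA _ _) (hlike _ _)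
  have hD3 : ∑ u', hmmAlpha init trans like k u' * hmmGamma trans like k (m+1) u' v = D := by
    rw [sum_alpha_gamma init trans like hlike (m+1) k v,
      show k + (m+1) + 1 = k + m + 2 by omega]
  have hD2 : ∑ w', hmmAlpha init trans like (k + m + 1) w' *
      hmmGamma trans like (k + m + 1) 0 w' v = D := by
    rw [hD, show hmmAlpha init trans like (k+m+2) v
        = (∑ w', hmmAlpha init trans like (k+m+1) w' * trans (k + m + 2) w' v)
            * like (k + m + 2) v from rfl,
      Finset.sum_congr rfl fun w' (_ : w' ∈ Finset.univ) =>
        congrArg (hmmAlpha init trans like (k+m+1) w' * ·)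
          (show hmmGamma trans like (k + m + 1) 0 w' v = trans (k + m + 2) w' v from rfl),
      mul_div_assoc, div_self (hlike (k+m+2) v).ne', mul_one]
  rw [hD3, hD2]
  have key : ∀ w : S,
      hmmAlpha init trans like k u * hmmGamma trans like k m u w /
          (∑ u', hmmAlpha init trans like k u' * hmmGamma trans like k m u' w) *
        (hmmAlpha init trans like (k + m + 1) w * hmmGamma trans like (k + m + 1) 0 w v / D)
      = hmmAlpha init trans like k u * (hmmGamma trans like k m u w * like (k + m + 1) w
          * trans (k + m + 2) w v) / D := by
    intro w
    rw [hD1 w, show hmmGamma trans like (k + m + 1) 0 w v = trans (k + m + 2) w v from rfl]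
    have hAw := (hA (k+m+1) w).ne'
    have hLw := (hlike (k+m+1) w).ne'
    field_simp
  rw [Finset.sum_congr rfl fun w _ => key w, ← Finset.sum_div, ← Finset.mul_sum,
    ← gamma_succ trans like m k u v]
end

section
/- The parametrized linear-Gaussian filtering composition on tuples (A, b, C, η, J), given by A_{ij} = A_j(I + C_i J_j)⁻¹A_i, b_{ij} = A_j(I + C_i J_j)⁻¹(b_i + C_i η_j) + b_j, C_{ij} = A_j(I + C_i J_j)⁻¹C_i A_jᵀ + C_j, η_{ij} = A_iᵀ(I + J_j C_i)⁻¹(η_j − J_j b_i) + η_i, J_{ij} = A_iᵀ(I + J_j C_i)⁻¹J_j A_i + J_i, is associative on the set of tuples where C ⪰ 0 and J ⪰ 0 (so that all matrices I + C J' appearing are invertible). -/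
open Matrix

namespace FiltAux

variable {d : ℕ}

open scoped MatrixOrder

/-- Embed a vector as a square matrix whose columns all equal the vector. -/
def vm (v : Fin d → ℝ) : Matrix (Fin d) (Fin d) ℝ := Matrix.of fun i _ => v i

lemma vm_inj {u v : Fin d → ℝ} (h : vm u = vm v) : u = v :=
  funext fun i => congrFun (congrFun h i) i

lemma vm_mulVec (A : Matrix (Fin d) (Fin d) ℝ) (v : Fin d → ℝ) :
    vm (A *ᵥ v) = A * vm v := by
  ext i j
  simp [vm, Matrix.mul_apply, Matrix.mulVec, dotProduct]

lemma vm_add (u v : Fin d → ℝ) : vm (u + v) = vm u + vm v := by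
  ext i j; simp [vm]

lemma vm_sub (u v : Fin d → ℝ) : vm (u - v) = vm u - vm v := by
  ext i j; simp [vm]

lemma isUnit_one_add {C J : Matrix (Fin d) (Fin d) ℝ}
    (hC : C.PosSemidef) (hJ : J.PosSemidef) : IsUnit (1 + C * J) := by
  have hherm : (CFC.sqrt C)ᴴ = CFC.sqrt C := (CFC.sqrt_nonneg C).posSemidef.1
  have h1 : (1 + CFC.sqrt C * J * CFC.sqrt C).PosDef := by
    have h2 := hJ.mul_mul_conjTranspose_same (CFC.sqrt C)
    rw [hherm] at h2
    exact Matrix.PosDef.one.add_posSemidef h2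
  rw [Matrix.isUnit_iff_isUnit_det]
  have hdet : (1 + C * J).det = (1 + CFC.sqrt C * J * CFC.sqrt C).det := by
    conv_lhs => rw [← CFC.sqrt_mul_sqrt_self C hC.nonneg]
    rw [Matrix.mul_assoc, Matrix.det_one_add_mul_comm]
  rw [hdet]
  exact h1.det_pos.ne'.isUnit

lemma psd_inv_mul {C J : Matrix (Fin d) (Fin d) ℝ}
    (hC : C.PosSemidef) (hJ : J.PosSemidef) : ((1 + C * J)⁻¹ * C).PosSemidef := by
  set s := CFC.sqrt C with hsdef
  have hss : s * s = C := CFC.sqrt_mul_sqrt_self C hC.nonneg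
  have hherm : sᴴ = s := (CFC.sqrt_nonneg C).posSemidef.1
  have hD : (1 + s * J * s).PosDef := by
    have h2 := hJ.mul_mul_conjTranspose_same s
    rw [hherm] at h2
    exact Matrix.PosDef.one.add_posSemidef h2
  have hu : IsUnit (1 + C * J) := isUnit_one_add hC hJ
  have hu' := (Matrix.isUnit_iff_isUnit_det _).1 hu
  have hD' := (Matrix.isUnit_iff_isUnit_det _).1 hD.isUnit
  have key : (1 + C * J) * (s * (1 + s * J * s)⁻¹ * s) = C := by
    have h2 : (1 + C * J) * s = s * (1 + s * J * s) := by rw [← hss]; noncomm_ring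
    calc (1 + C * J) * (s * (1 + s * J * s)⁻¹ * s)
        = ((1 + C * J) * s) * ((1 + s * J * s)⁻¹ * s) := by noncomm_ring
      _ = s * ((1 + s * J * s) * (1 + s * J * s)⁻¹) * s := by rw [h2]; noncomm_ring
      _ = s * s := by rw [Matrix.mul_nonsing_inv _ hD', Matrix.mul_one]
      _ = C := hss
  have h3 : (1 + C * J)⁻¹ * ((1 + C * J) * (s * (1 + s * J * s)⁻¹ * s))
      = (1 + C * J)⁻¹ * C := by rw [key]
  rw [← Matrix.mul_assoc, Matrix.nonsing_inv_mul _ hu', Matrix.one_mul] at h3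
  rw [← h3]
  have h4 := hD.inv.posSemidef.mul_mul_conjTranspose_same s
  rwa [hherm] at h4

lemma inv_push {X Y A B : Matrix (Fin d) (Fin d) ℝ}
    (hX : IsUnit X) (hY : IsUnit Y) (h : X * A = B * Y) : X⁻¹ * B = A * Y⁻¹ := by
  have hX' := (Matrix.isUnit_iff_isUnit_det X).1 hX
  have hY' := (Matrix.isUnit_iff_isUnit_det Y).1 hY
  have e1 : X⁻¹ * X = 1 := Matrix.nonsing_inv_mul _ hX'
  have e2 : Y * Y⁻¹ = 1 := Matrix.mul_nonsing_inv _ hY'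
  calc X⁻¹ * B = X⁻¹ * B * (Y * Y⁻¹) := by rw [e2, Matrix.mul_one]
    _ = X⁻¹ * (B * Y) * Y⁻¹ := by noncomm_ring
    _ = X⁻¹ * (X * A) * Y⁻¹ := by rw [h]
    _ = (X⁻¹ * X) * (A * Y⁻¹) := by noncomm_ring
    _ = A * Y⁻¹ := by rw [e1, Matrix.one_mul]

lemma invMul {X : Matrix (Fin d) (Fin d) ℝ} (hX : IsUnit X) : X⁻¹ * X = 1 :=
  Matrix.nonsing_inv_mul _ ((Matrix.isUnit_iff_isUnit_det X).1 hX)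

lemma mulInv {X : Matrix (Fin d) (Fin d) ℝ} (hX : IsUnit X) : X * X⁻¹ = 1 :=
  Matrix.mul_nonsing_inv _ ((Matrix.isUnit_iff_isUnit_det X).1 hX)

lemma psd_transpose {C : Matrix (Fin d) (Fin d) ℝ} (hC : C.PosSemidef) : Cᵀ = C :=
  (Matrix.conjTranspose_eq_transpose_of_trivial C).symm.trans hC.1

end FiltAux

open FiltAux

set_option maxHeartbeats 1600000

/-- Parameter tuple `(A, b, C, η, J)` of a linear/Gaussian filtering element,
with `C` and `J` symmetric positive semidefinite covariance/information
matrices. -/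
structure FiltParam (d : ℕ) where
  A : Matrix (Fin d) (Fin d) ℝ
  b : Fin d → ℝ
  C : Matrix (Fin d) (Fin d) ℝ
  η : Fin d → ℝ
  J : Matrix (Fin d) (Fin d) ℝ

/-- The parametrized linear/Gaussian filtering composition:
`A_{ij} = Aⱼ(I + Cᵢ Jⱼ)⁻¹Aᵢ`, `b_{ij} = Aⱼ(I + Cᵢ Jⱼ)⁻¹(bᵢ + Cᵢ ηⱼ) + bⱼ`,
`C_{ij} = Aⱼ(I + Cᵢ Jⱼ)⁻¹Cᵢ Aⱼᵀ + Cⱼ`,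
`η_{ij} = Aᵢᵀ(I + Jⱼ Cᵢ)⁻¹(ηⱼ − Jⱼ bᵢ) + ηᵢ`,
`J_{ij} = Aᵢᵀ(I + Jⱼ Cᵢ)⁻¹Jⱼ Aᵢ + Jᵢ`. -/
noncomputable def filtComp {d : ℕ} (p q : FiltParam d) : FiltParam d where
  A := q.A * (1 + p.C * q.J)⁻¹ * p.A
  b := q.A *ᵥ (1 + p.C * q.J)⁻¹ *ᵥ (p.b + p.C *ᵥ q.η) + q.b
  C := q.A * (1 + p.C * q.J)⁻¹ * p.C * q.Aᵀ + q.C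
  η := p.Aᵀ *ᵥ (1 + q.J * p.C)⁻¹ *ᵥ (q.η - q.J *ᵥ p.b) + p.η
  J := p.Aᵀ * (1 + q.J * p.C)⁻¹ * q.J * p.A + p.J

/-- **Associativity of the parametrized linear/Gaussian filtering composition**
on tuples with `C ⪰ 0` and `J ⪰ 0` (so that all matrices `I + C J'` appearing
are invertible). -/
theorem filtComp_assoc {d : ℕ} (p q r : FiltParam d)
    (hpC : p.C.PosSemidef) (hpJ : p.J.PosSemidef)
    (hqC : q.C.PosSemidef) (hqJ : q.J.PosSemidef)
    (hrC : r.C.PosSemidef) (hrJ : r.J.PosSemidef) :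
    filtComp (filtComp p q) r = filtComp p (filtComp q r) := by
  simp only [filtComp]
  rw [FiltParam.mk.injEq]
  set M : Matrix (Fin d) (Fin d) ℝ := 1 + p.C * q.J with hM
  set N : Matrix (Fin d) (Fin d) ℝ := 1 + q.J * p.C with hN
  set S : Matrix (Fin d) (Fin d) ℝ := 1 + q.C * r.J with hS
  set T : Matrix (Fin d) (Fin d) ℝ := 1 + r.J * q.C with hT
  set G : Matrix (Fin d) (Fin d) ℝ := q.A * M⁻¹ * p.C * q.Aᵀ with hG
  set H : Matrix (Fin d) (Fin d) ℝ := q.Aᵀ * T⁻¹ * r.J * q.A with hH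
  set P : Matrix (Fin d) (Fin d) ℝ := 1 + (G + q.C) * r.J with hP
  set Q : Matrix (Fin d) (Fin d) ℝ := 1 + r.J * (G + q.C) with hQ
  set U : Matrix (Fin d) (Fin d) ℝ := 1 + p.C * (H + q.J) with hU
  set V : Matrix (Fin d) (Fin d) ℝ := 1 + (H + q.J) * p.C with hV
  -- symmetry facts
  have hCp : p.Cᵀ = p.C := psd_transpose hpC
  have hCq : q.Cᵀ = q.C := psd_transpose hqC
  have hJq : q.Jᵀ = q.J := psd_transpose hqJ
  have hJr : r.Jᵀ = r.J := psd_transpose hrJ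
  -- units for the four basic resolvents
  have uM : IsUnit M := by rw [hM]; exact isUnit_one_add hpC hqJ
  have uN : IsUnit N := by rw [hN]; exact isUnit_one_add hqJ hpC
  have uS : IsUnit S := by rw [hS]; exact isUnit_one_add hqC hrJ
  have uT : IsUnit T := by rw [hT]; exact isUnit_one_add hrJ hqC
  -- G and H are PSD
  have hGpsd : G.PosSemidef := by
    have k : (M⁻¹ * p.C).PosSemidef := by rw [hM]; exact psd_inv_mul hpC hqJ
    have h2 := k.mul_mul_conjTranspose_same q.A
    rw [Matrix.conjTranspose_eq_transpose_of_trivial] at h2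
    rw [hG, Matrix.mul_assoc q.A M⁻¹ p.C]
    exact h2
  have hHpsd : H.PosSemidef := by
    have k : (T⁻¹ * r.J).PosSemidef := by rw [hT]; exact psd_inv_mul hrJ hqC
    have h2 := k.mul_mul_conjTranspose_same q.Aᵀ
    rw [Matrix.conjTranspose_eq_transpose_of_trivial, Matrix.transpose_transpose] at h2
    rw [hH, Matrix.mul_assoc q.Aᵀ T⁻¹ r.J]
    exact h2
  -- units for the composite resolvents
  have uP : IsUnit P := by rw [hP]; exact isUnit_one_add (hGpsd.add hqC) hrJ
  have uQ : IsUnit Q := by rw [hQ]; exact isUnit_one_add hrJ (hGpsd.add hqC)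
  have uU : IsUnit U := by rw [hU]; exact isUnit_one_add hpC (hHpsd.add hqJ)
  have uV : IsUnit V := by rw [hV]; exact isUnit_one_add (hHpsd.add hqJ) hpC
  -- transposes of the resolvents
  have hSt : (S⁻¹)ᵀ = T⁻¹ := by
    rw [Matrix.transpose_nonsing_inv]
    congr 1
    rw [hS, hT, Matrix.transpose_add, Matrix.transpose_one, Matrix.transpose_mul, hCq, hJr]
  have hMt : (M⁻¹)ᵀ = N⁻¹ := by
    rw [Matrix.transpose_nonsing_inv]
    congr 1
    rw [hM, hN, Matrix.transpose_add, Matrix.transpose_one, Matrix.transpose_mul, hCp, hJq]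
  -- push-through identities
  have cJS : T⁻¹ * r.J = r.J * S⁻¹ :=
    inv_push uT uS (by rw [hT, hS]; noncomm_ring)
  have cMP : M⁻¹ * p.C = p.C * N⁻¹ :=
    inv_push uM uN (by rw [hM, hN]; noncomm_ring)
  -- === the P/S/U side ===
  have hW : 1 + G * (T⁻¹ * r.J) = P * S⁻¹ := by
    rw [cJS, hP]
    have h1 : (1 + (G + q.C) * r.J) * S⁻¹ = S * S⁻¹ + G * (r.J * S⁻¹) := by
      rw [hS]; noncomm_ring
    rw [h1, mulInv uS]
  have uW : IsUnit (1 + G * (T⁻¹ * r.J)) := by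
    rw [hW]; exact uP.mul (Matrix.isUnit_nonsing_inv_iff.2 uS)
  have hP2 : P = (1 + G * (T⁻¹ * r.J)) * S := by
    rw [hW, Matrix.mul_assoc, invMul uS, Matrix.mul_one]
  have hMU : (1 + G * (T⁻¹ * r.J)) * q.A = q.A * M⁻¹ * U := by
    rw [hG, hU, hH]
    have h1 : q.A * M⁻¹ * (1 + p.C * (q.Aᵀ * T⁻¹ * r.J * q.A + q.J))
        = q.A * (M⁻¹ * M) + q.A * M⁻¹ * p.C * q.Aᵀ * (T⁻¹ * r.J) * q.A := by
      rw [hM]; noncomm_ring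
    rw [h1, invMul uM]
    noncomm_ring
  have st : P⁻¹ * (q.A * M⁻¹) = S⁻¹ * (q.A * U⁻¹) := by
    have h1 : (1 + G * (T⁻¹ * r.J))⁻¹ * (q.A * M⁻¹) = q.A * U⁻¹ := inv_push uW uU hMU
    calc P⁻¹ * (q.A * M⁻¹)
        = S⁻¹ * ((1 + G * (T⁻¹ * r.J))⁻¹ * (q.A * M⁻¹)) := by
          rw [hP2, Matrix.mul_inv_rev, Matrix.mul_assoc]
      _ = S⁻¹ * (q.A * U⁻¹) := by rw [h1]
  have hSW : S⁻¹ = P⁻¹ * (1 + G * (T⁻¹ * r.J)) := by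
    rw [hW, ← Matrix.mul_assoc, invMul uP, Matrix.one_mul]
  have dbb : P⁻¹ = S⁻¹ - S⁻¹ * (q.A * U⁻¹) * (p.C * (q.Aᵀ * (T⁻¹ * r.J))) := by
    calc P⁻¹ = P⁻¹ * (1 + G * (T⁻¹ * r.J))
          - P⁻¹ * (q.A * M⁻¹) * (p.C * (q.Aᵀ * (T⁻¹ * r.J))) := by rw [hG]; noncomm_ring
      _ = S⁻¹ - S⁻¹ * (q.A * U⁻¹) * (p.C * (q.Aᵀ * (T⁻¹ * r.J))) := by rw [← hSW, st]
  have hPG : P⁻¹ * G = S⁻¹ * (q.A * U⁻¹) * (p.C * q.Aᵀ) := by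
    calc P⁻¹ * G = P⁻¹ * (q.A * M⁻¹) * (p.C * q.Aᵀ) := by rw [hG]; noncomm_ring
      _ = S⁻¹ * (q.A * U⁻¹) * (p.C * q.Aᵀ) := by rw [st]
  have hTT : T⁻¹ * (r.J * q.C) = 1 - T⁻¹ := by
    calc T⁻¹ * (r.J * q.C) = T⁻¹ * T - T⁻¹ := by rw [hT]; noncomm_ring
      _ = 1 - T⁻¹ := by rw [invMul uT]
  have dc : P⁻¹ * (G + q.C)
      = S⁻¹ * (q.A * U⁻¹) * (p.C * (q.Aᵀ * T⁻¹)) + S⁻¹ * q.C := by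
    calc P⁻¹ * (G + q.C) = P⁻¹ * G + P⁻¹ * q.C := by noncomm_ring
      _ = S⁻¹ * (q.A * U⁻¹) * (p.C * q.Aᵀ)
          + (S⁻¹ - S⁻¹ * (q.A * U⁻¹) * (p.C * (q.Aᵀ * (T⁻¹ * r.J)))) * q.C := by
            rw [hPG, dbb]
      _ = S⁻¹ * (q.A * U⁻¹) * (p.C * q.Aᵀ) + S⁻¹ * q.C
          - S⁻¹ * (q.A * U⁻¹) * (p.C * (q.Aᵀ * (T⁻¹ * (r.J * q.C)))) := by noncomm_ring
      _ = S⁻¹ * (q.A * U⁻¹) * (p.C * q.Aᵀ) + S⁻¹ * q.C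
          - S⁻¹ * (q.A * U⁻¹) * (p.C * (q.Aᵀ * (1 - T⁻¹))) := by rw [hTT]
      _ = S⁻¹ * (q.A * U⁻¹) * (p.C * (q.Aᵀ * T⁻¹)) + S⁻¹ * q.C := by noncomm_ring
  -- === the V/N/Q side (mirror) ===
  have hW' : 1 + H * (M⁻¹ * p.C) = V * N⁻¹ := by
    rw [cMP, hV]
    have h1 : (1 + (H + q.J) * p.C) * N⁻¹ = N * N⁻¹ + H * (p.C * N⁻¹) := by
      rw [hN]; noncomm_ring
    rw [h1, mulInv uN]
  have uW' : IsUnit (1 + H * (M⁻¹ * p.C)) := by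
    rw [hW']; exact uV.mul (Matrix.isUnit_nonsing_inv_iff.2 uN)
  have hV2 : V = (1 + H * (M⁻¹ * p.C)) * N := by
    rw [hW', Matrix.mul_assoc, invMul uN, Matrix.mul_one]
  have hQT : (1 + H * (M⁻¹ * p.C)) * q.Aᵀ = q.Aᵀ * T⁻¹ * Q := by
    rw [hH, hQ, hG]
    have h1 : q.Aᵀ * T⁻¹ * (1 + r.J * (q.A * M⁻¹ * p.C * q.Aᵀ + q.C))
        = q.Aᵀ * (T⁻¹ * T) + q.Aᵀ * T⁻¹ * r.J * q.A * (M⁻¹ * p.C) * q.Aᵀ := by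
      rw [hT]; noncomm_ring
    rw [h1, invMul uT]
    noncomm_ring
  have st' : V⁻¹ * (q.Aᵀ * T⁻¹) = N⁻¹ * (q.Aᵀ * Q⁻¹) := by
    have h1 : (1 + H * (M⁻¹ * p.C))⁻¹ * (q.Aᵀ * T⁻¹) = q.Aᵀ * Q⁻¹ := inv_push uW' uQ hQT
    calc V⁻¹ * (q.Aᵀ * T⁻¹)
        = N⁻¹ * ((1 + H * (M⁻¹ * p.C))⁻¹ * (q.Aᵀ * T⁻¹)) := by
          rw [hV2, Matrix.mul_inv_rev, Matrix.mul_assoc]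
      _ = N⁻¹ * (q.Aᵀ * Q⁻¹) := by rw [h1]
  have hNW : N⁻¹ = V⁻¹ * (1 + H * (M⁻¹ * p.C)) := by
    rw [hW', ← Matrix.mul_assoc, invMul uV, Matrix.one_mul]
  have dbb' : V⁻¹ = N⁻¹ - N⁻¹ * (q.Aᵀ * Q⁻¹) * (r.J * (q.A * (M⁻¹ * p.C))) := by
    calc V⁻¹ = V⁻¹ * (1 + H * (M⁻¹ * p.C))
          - V⁻¹ * (q.Aᵀ * T⁻¹) * (r.J * (q.A * (M⁻¹ * p.C))) := by rw [hH]; noncomm_ring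
      _ = N⁻¹ - N⁻¹ * (q.Aᵀ * Q⁻¹) * (r.J * (q.A * (M⁻¹ * p.C))) := by rw [← hNW, st']
  have hVH : V⁻¹ * H = N⁻¹ * (q.Aᵀ * Q⁻¹) * (r.J * q.A) := by
    calc V⁻¹ * H = V⁻¹ * (q.Aᵀ * T⁻¹) * (r.J * q.A) := by rw [hH]; noncomm_ring
      _ = N⁻¹ * (q.Aᵀ * Q⁻¹) * (r.J * q.A) := by rw [st']
  have hMM : M⁻¹ * (p.C * q.J) = 1 - M⁻¹ := by
    calc M⁻¹ * (p.C * q.J) = M⁻¹ * M - M⁻¹ := by rw [hM]; noncomm_ring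
      _ = 1 - M⁻¹ := by rw [invMul uM]
  have dc' : V⁻¹ * (H + q.J)
      = N⁻¹ * (q.Aᵀ * Q⁻¹) * (r.J * (q.A * M⁻¹)) + N⁻¹ * q.J := by
    calc V⁻¹ * (H + q.J) = V⁻¹ * H + V⁻¹ * q.J := by noncomm_ring
      _ = N⁻¹ * (q.Aᵀ * Q⁻¹) * (r.J * q.A)
          + (N⁻¹ - N⁻¹ * (q.Aᵀ * Q⁻¹) * (r.J * (q.A * (M⁻¹ * p.C)))) * q.J := by
            rw [hVH, dbb']
      _ = N⁻¹ * (q.Aᵀ * Q⁻¹) * (r.J * q.A) + N⁻¹ * q.J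
          - N⁻¹ * (q.Aᵀ * Q⁻¹) * (r.J * (q.A * (M⁻¹ * (p.C * q.J)))) := by noncomm_ring
      _ = N⁻¹ * (q.Aᵀ * Q⁻¹) * (r.J * q.A) + N⁻¹ * q.J
          - N⁻¹ * (q.Aᵀ * Q⁻¹) * (r.J * (q.A * (1 - M⁻¹))) := by rw [hMM]
      _ = N⁻¹ * (q.Aᵀ * Q⁻¹) * (r.J * (q.A * M⁻¹)) + N⁻¹ * q.J := by noncomm_ring
  -- === the five components ===
  refine ⟨?_, ?_, ?_, ?_, ?_⟩
  · -- A component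
    calc r.A * P⁻¹ * (q.A * M⁻¹ * p.A)
        = r.A * (P⁻¹ * (q.A * M⁻¹)) * p.A := by noncomm_ring
      _ = r.A * (S⁻¹ * (q.A * U⁻¹)) * p.A := by rw [st]
      _ = r.A * S⁻¹ * q.A * U⁻¹ * p.A := by noncomm_ring
  · -- b component
    apply vm_inj
    simp only [vm_add, vm_sub, vm_mulVec]
    calc r.A * (P⁻¹ * (q.A * (M⁻¹ * (vm p.b + p.C * vm q.η)) + vm q.b + (G + q.C) * vm r.η))
          + vm r.b
        = r.A * (P⁻¹ * (q.A * M⁻¹)) * (vm p.b + p.C * vm q.η)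
          + r.A * (P⁻¹ * (G + q.C)) * vm r.η
          + r.A * (P⁻¹ * vm q.b) + vm r.b := by noncomm_ring
      _ = r.A * (S⁻¹ * (q.A * U⁻¹)) * (vm p.b + p.C * vm q.η)
          + r.A * ((S⁻¹ * (q.A * U⁻¹) * (p.C * (q.Aᵀ * T⁻¹)) + S⁻¹ * q.C)) * vm r.η
          + r.A * ((S⁻¹ - S⁻¹ * (q.A * U⁻¹) * (p.C * (q.Aᵀ * (T⁻¹ * r.J)))) * vm q.b)
          + vm r.b := by rw [st, dc, dbb]
      _ = r.A * S⁻¹ * q.A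
            * (U⁻¹ * (vm p.b + p.C * (q.Aᵀ * (T⁻¹ * (vm r.η - r.J * vm q.b)) + vm q.η)))
          + (r.A * (S⁻¹ * (vm q.b + q.C * vm r.η)) + vm r.b) := by noncomm_ring
  · -- C component
    simp only [Matrix.transpose_mul, hSt]
    calc r.A * P⁻¹ * (G + q.C) * r.Aᵀ + r.C
        = r.A * (P⁻¹ * (G + q.C)) * r.Aᵀ + r.C := by noncomm_ring
      _ = r.A * (S⁻¹ * (q.A * U⁻¹) * (p.C * (q.Aᵀ * T⁻¹)) + S⁻¹ * q.C) * r.Aᵀ + r.C := by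
          rw [dc]
      _ = r.A * S⁻¹ * q.A * U⁻¹ * p.C * (q.Aᵀ * (T⁻¹ * r.Aᵀ))
          + (r.A * S⁻¹ * q.C * r.Aᵀ + r.C) := by noncomm_ring
  · -- η component
    apply vm_inj
    simp only [Matrix.transpose_mul, hMt, vm_add, vm_sub, vm_mulVec]
    calc p.Aᵀ * (N⁻¹ * q.Aᵀ) * (Q⁻¹ * (vm r.η
            - r.J * (q.A * (M⁻¹ * (vm p.b + p.C * vm q.η)) + vm q.b)))
          + (p.Aᵀ * (N⁻¹ * (vm q.η - q.J * vm p.b)) + vm p.η)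
        = p.Aᵀ * (N⁻¹ * (q.Aᵀ * Q⁻¹)) * (vm r.η - r.J * vm q.b)
          - p.Aᵀ * (N⁻¹ * (q.Aᵀ * Q⁻¹) * (r.J * (q.A * M⁻¹)) + N⁻¹ * q.J) * vm p.b
          + p.Aᵀ * ((N⁻¹ - N⁻¹ * (q.Aᵀ * Q⁻¹) * (r.J * (q.A * (M⁻¹ * p.C)))) * vm q.η)
          + vm p.η := by noncomm_ring
      _ = p.Aᵀ * (V⁻¹ * (q.Aᵀ * T⁻¹)) * (vm r.η - r.J * vm q.b)
          - p.Aᵀ * (V⁻¹ * (H + q.J)) * vm p.b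
          + p.Aᵀ * (V⁻¹ * vm q.η)
          + vm p.η := by rw [← dc', ← dbb', ← st']
      _ = p.Aᵀ * (V⁻¹ * (q.Aᵀ * (T⁻¹ * (vm r.η - r.J * vm q.b)) + vm q.η
            - (H + q.J) * vm p.b)) + vm p.η := by noncomm_ring
  · -- J component
    simp only [Matrix.transpose_mul, hMt]
    calc p.Aᵀ * (N⁻¹ * q.Aᵀ) * Q⁻¹ * r.J * (q.A * M⁻¹ * p.A)
          + (p.Aᵀ * N⁻¹ * q.J * p.A + p.J)
        = p.Aᵀ * (N⁻¹ * (q.Aᵀ * Q⁻¹) * (r.J * (q.A * M⁻¹)) + N⁻¹ * q.J) * p.A + p.J := by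
          noncomm_ring
      _ = p.Aᵀ * (V⁻¹ * (H + q.J)) * p.A + p.J := by rw [← dc']
      _ = p.Aᵀ * V⁻¹ * (H + q.J) * p.A + p.J := by noncomm_ring
end

section
/- The Blelloch parallel scan algorithm (up-sweep followed by down-sweep and a final combining pass) applied to a sequence (a_1, …, a_n) with n = 2^m and an associative binary operator ⊗ correctly computes the all-prefix-sums sequence (a_1, a_1⊗a_2, …, a_1⊗⋯⊗a_n). -/
/-- The operation `⊗` lifted to `Option α`, with `none` an adjoined identity
(used to handle the exclusive-scan intermediate of the Blelloch algorithm). -/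
def liftOp {α : Type*} (op : α → α → α) : Option α → Option α → Option α
  | none, y => y
  | some x, none => some x
  | some x, some y => some (op x y)

/-- One level `d` of the up-sweep: in every block of size `2^(d+1)` of the
(0-indexed) array, the last position `k` receives `a[j] ⊗ a[k]` where `j` is
the last position of the left half-block. -/
def upStep {α : Type*} (op : α → α → α) (d : ℕ) (f : ℕ → Option α) : ℕ → Option α :=
  fun t =>
    if (t + 1) % 2 ^ (d + 1) = 0 then liftOp op (f (t - 2 ^ d)) (f t) else f t

/-- The up-sweep phase: levels `d = 0, …, m-1` applied in order. -/
def upSweep {α : Type*} (op : α → α → α) : ℕ → (ℕ → Option α) → ℕ → Option α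
  | 0, f => f
  | d + 1, f => upStep op d (upSweep op d f)

/-- One level `d` of the down-sweep: within each block of size `2^(d+1)` with
half-block ends `j` and `k`, simultaneously `a[j] ← a[k]` and
`a[k] ← a[k] ⊗ (old a[j])`. -/
def downStep {α : Type*} (op : α → α → α) (d : ℕ) (f : ℕ → Option α) : ℕ → Option α :=
  fun t =>
    if (t + 1) % 2 ^ (d + 1) = 0 then liftOp op (f t) (f (t - 2 ^ d))
    else if (t + 1) % 2 ^ (d + 1) = 2 ^ d then f (t + 2 ^ d)
    else f t

/-- The down-sweep phase: levels `d = m-1, …, 0` applied in order. -/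
def downSweep {α : Type*} (op : α → α → α) : ℕ → (ℕ → Option α) → ℕ → Option α
  | 0, f => f
  | d + 1, f => downSweep op d (downStep op d f)

/-- The full Blelloch parallel scan on an input sequence `a` of length `2^m`:
up-sweep, clearing of the root (position `2^m - 1`) to the adjoined identity,
down-sweep (producing the exclusive scan), and a final pass combining with the
saved input `a`. -/
def blellochScan {α : Type*} [DecidableEq ℕ] (op : α → α → α) (m : ℕ) (a : ℕ → α) :
    ℕ → Option α :=
  fun i =>
    liftOp op
      (downSweep op m
        (Function.update (upSweep op m (fun t => some (a t))) (2 ^ m - 1) none) i)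
      (some (a i))

/-- The all-prefix-sums: `inclusivePrefix op a i = some (a_0 ⊗ a_1 ⊗ ⋯ ⊗ a_i)`. -/
def inclusivePrefix {α : Type*} (op : α → α → α) (a : ℕ → α) (i : ℕ) : Option α :=
  ((List.range (i + 1)).map (fun j => some (a j))).foldl (liftOp op) none

section
variable {α : Type*} (op : α → α → α) (a : ℕ → α)

lemma liftOp_none_right (x : Option α) : liftOp op x none = x := by cases x <;> rfl

lemma liftOp_assoc (hassoc : ∀ x y z, op (op x y) z = op x (op y z)) (x y z : Option α) :
    liftOp op (liftOp op x y) z = liftOp op x (liftOp op y z) := by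
  cases x <;> cases y <;> cases z <;> simp [liftOp, hassoc]

/-- Segment fold: `seg op a s l = a s ⊗ ⋯ ⊗ a (s+l-1)` in `Option α`. -/
def seg (s : ℕ) : ℕ → Option α
  | 0 => none
  | l + 1 => liftOp op (seg s l) (some (a (s + l)))

lemma seg_add (hassoc : ∀ x y z, op (op x y) z = op x (op y z)) (s l₁ l₂ : ℕ) :
    seg op a s (l₁ + l₂) = liftOp op (seg op a s l₁) (seg op a (s + l₁) l₂) := by
  induction l₂ with
  | zero => simp [seg, liftOp_none_right]
  | succ n ih =>
      show seg op a s (l₁ + n + 1) = _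
      rw [seg, ih, seg, liftOp_assoc op hassoc, add_assoc]
end

section
variable {α : Type*} (op : α → α → α) (a : ℕ → α)





lemma gcd_two_pow (m d : ℕ) (hd : d ≤ m) (r : ℕ) (hr : r % 2 = 1) :
    Nat.gcd (2 ^ m) (2 ^ d * r) = 2 ^ d := by
  obtain ⟨e, rfl⟩ := Nat.exists_eq_add_of_le hd
  rw [pow_add, Nat.gcd_mul_left]
  have hcop : Nat.Coprime (2 ^ e) r := by
    apply Nat.Coprime.pow_left
    exact Nat.coprime_two_left.mpr (Nat.odd_iff.mpr hr)
  rw [hcop]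
  ring

lemma up_eval (hassoc : ∀ x y z, op (op x y) z = op x (op y z)) (d : ℕ) :
    ∀ t, upSweep op d (fun t => some (a t)) t =
      seg op a (t + 1 - Nat.gcd (2 ^ d) (t + 1)) (Nat.gcd (2 ^ d) (t + 1)) := by
  induction d with
  | zero =>
      intro t
      simp [upSweep, Nat.gcd_one_left, seg, liftOp]
  | succ d ih =>
      intro t
      show upStep op d (upSweep op d fun t => some (a t)) t = _
      unfold upStep
      by_cases h : (t + 1) % 2 ^ (d + 1) = 0
      · rw [if_pos h]
        have hdvd : 2 ^ (d + 1) ∣ t + 1 := Nat.dvd_of_mod_eq_zero h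
        have hle : 2 ^ (d + 1) ≤ t + 1 := Nat.le_of_dvd (Nat.succ_pos t) hdvd
        have hp : 2 ^ (d + 1) = 2 ^ d + 2 ^ d := by rw [pow_succ]; ring
        have hdvd' : 2 ^ d ∣ t + 1 := dvd_trans (pow_dvd_pow 2 d.le_succ) hdvd
        have hg1 : Nat.gcd (2 ^ (d + 1)) (t + 1) = 2 ^ (d + 1) := Nat.gcd_eq_left hdvd
        have hg2 : Nat.gcd (2 ^ d) (t + 1) = 2 ^ d := Nat.gcd_eq_left hdvd'
        have ht' : t - 2 ^ d + 1 = t + 1 - 2 ^ d := by omega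
        have hdvd'' : 2 ^ d ∣ t + 1 - 2 ^ d := Nat.dvd_sub hdvd' dvd_rfl
        have hg3 : Nat.gcd (2 ^ d) (t - 2 ^ d + 1) = 2 ^ d := by
          rw [ht']; exact Nat.gcd_eq_left hdvd''
        rw [ih t, ih (t - 2 ^ d), hg1, hg2, hg3, ht']
        have e1 : t + 1 - 2 ^ d - 2 ^ d = t + 1 - 2 ^ (d + 1) := by omega
        have e2 : t + 1 - (2 ^ d + 2 ^ d) + 2 ^ d = t + 1 - 2 ^ d := by omega
        rw [e1, hp, seg_add op a hassoc, e2]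
      · rw [if_neg h]
        have hnd : ¬ 2 ^ (d + 1) ∣ t + 1 := fun hdd => h (Nat.mod_eq_zero_of_dvd hdd)
        have hg : Nat.gcd (2 ^ (d + 1)) (t + 1) = Nat.gcd (2 ^ d) (t + 1) := by
          apply Nat.dvd_antisymm
          · apply Nat.dvd_gcd _ (Nat.gcd_dvd_right _ _)
            obtain ⟨j, hj, hje⟩ := (Nat.dvd_prime_pow Nat.prime_two).mp
              (Nat.gcd_dvd_left (2 ^ (d + 1)) (t + 1))
            have hjd : j ≤ d := by
              rcases Nat.lt_or_ge j (d + 1) with hlt | hge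
              · omega
              · exfalso
                apply hnd
                calc 2 ^ (d + 1) ∣ 2 ^ j := pow_dvd_pow 2 hge
                  _ ∣ t + 1 := hje ▸ Nat.gcd_dvd_right _ _
            exact hje ▸ pow_dvd_pow 2 hjd
          · exact Nat.dvd_gcd
              (dvd_trans (Nat.gcd_dvd_left _ _) (pow_dvd_pow 2 d.le_succ))
              (Nat.gcd_dvd_right _ _)
        rw [ih t, hg]






lemma down_eval (hassoc : ∀ x y z, op (op x y) z = op x (op y z)) (m : ℕ) :
    ∀ d, d ≤ m → ∀ g : ℕ → Option α,
      (∀ t, t < 2 ^ m → 2 ^ d ∣ t + 1 → g t = seg op a 0 (t + 1 - 2 ^ d)) →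
      (∀ t, t < 2 ^ m → ¬ 2 ^ d ∣ t + 1 → g t = upSweep op m (fun t => some (a t)) t) →
      ∀ t, t < 2 ^ m → downSweep op d g t = seg op a 0 t := by
  intro d
  induction d with
  | zero =>
      intro _ g H1 _ t ht
      have := H1 t ht (one_dvd _)
      simpa [downSweep] using this
  | succ d ih =>
      intro hdm g H1 H2 t ht
      show downSweep op d (downStep op d g) t = _
      have hp : 2 ^ (d + 1) = 2 ^ d + 2 ^ d := by rw [pow_succ]; ring
      have hpos : 0 < 2 ^ d := Nat.pow_pos (by norm_num)
      apply ih (by omega) _ _ _ t ht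
      · -- new H1
        intro t ht hdvd
        obtain ⟨q, hq⟩ := hdvd
        have hmod : (t + 1) % 2 ^ (d + 1) = 2 ^ d * (q % 2) := by
          rw [hq, pow_succ, Nat.mul_mod_mul_left]
        have hq1 : 1 ≤ q := by
          by_contra hq0
          rw [show q = 0 by omega, Nat.mul_zero] at hq
          omega
        unfold downStep
        rcases Nat.mod_two_eq_zero_or_one q with hq2 | hq2
        · -- q even: combine branch
          obtain ⟨q1, rfl⟩ : ∃ q1, q = q1 + 1 := ⟨q - 1, by omega⟩
          have hqlin : t + 1 = 2 ^ d * q1 + 2 ^ d := by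
            rw [hq, Nat.mul_add, Nat.mul_one]
          have hodd : q1 % 2 = 1 := by omega
          obtain ⟨q', hq'⟩ : 2 ∣ q1 + 1 := by omega
          have hdvd1 : 2 ^ (d + 1) ∣ t + 1 := ⟨q', by rw [hq, hq', pow_succ]; ring⟩
          have hle : 2 ^ (d + 1) ≤ t + 1 := Nat.le_of_dvd (by omega) hdvd1
          rw [if_pos (by rw [hmod, hq2, Nat.mul_zero])]
          have hgt : g t = seg op a 0 (t + 1 - 2 ^ (d + 1)) := H1 t ht hdvd1
          have ht2 : t - 2 ^ d + 1 = 2 ^ d * q1 := by omega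
          have hnd2 : ¬ 2 ^ (d + 1) ∣ t - 2 ^ d + 1 := by
            rintro ⟨c, hc⟩
            rw [ht2, pow_succ, mul_assoc] at hc
            have := Nat.eq_of_mul_eq_mul_left hpos hc
            omega
          have hgl : g (t - 2 ^ d) = upSweep op m (fun t => some (a t)) (t - 2 ^ d) :=
            H2 _ (by omega) hnd2
          rw [hgt, hgl, up_eval op a hassoc m, ht2,
            gcd_two_pow m d (by omega) q1 hodd, ← ht2]
          have e1 : t - 2 ^ d + 1 - 2 ^ d = t + 1 - 2 ^ (d + 1) := by omega
          have e2 : t + 1 - 2 ^ d = (t + 1 - 2 ^ (d + 1)) + 2 ^ d := by omega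
          rw [e1, e2, seg_add op a hassoc, Nat.zero_add]
        · -- q odd: copy-from-right branch
          have hmod' : (t + 1) % 2 ^ (d + 1) = 2 ^ d := by rw [hmod, hq2, Nat.mul_one]
          rw [if_neg (by omega), if_pos hmod']
          obtain ⟨c, hc⟩ : 2 ∣ q + 1 := by omega
          have hdvd1 : 2 ^ (d + 1) ∣ t + 2 ^ d + 1 :=
            ⟨c, by rw [pow_succ, mul_assoc, ← hc, Nat.mul_add, Nat.mul_one]; omega⟩
          have hle : t + 2 ^ d < 2 ^ m := by
            obtain ⟨c', hc'⟩ := hdvd1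
            obtain ⟨e, he⟩ : 2 ^ (d + 1) ∣ 2 ^ m := pow_dvd_pow 2 hdm
            have hcd : c' ≤ e := by
              by_contra hce
              have h1 : e + 1 ≤ c' := by omega
              have h2 : 2 ^ (d + 1) * (e + 1) ≤ 2 ^ (d + 1) * c' :=
                Nat.mul_le_mul_left _ h1
              have h3 : 2 ^ (d + 1) * (e + 1) = 2 ^ (d + 1) * e + 2 ^ (d + 1) := by ring
              omega
            have := Nat.mul_le_mul_left (2 ^ (d + 1)) hcd
            omega
          have h2d : 2 ^ d ≤ t + 1 := Nat.le_of_dvd (by omega) ⟨q, hq⟩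
          rw [H1 (t + 2 ^ d) hle hdvd1]
          congr 1
          omega
      · -- new H2
        intro t ht hnd
        unfold downStep
        have hc1 : ¬ (t + 1) % 2 ^ (d + 1) = 0 := by
          intro h0
          exact hnd (dvd_trans (pow_dvd_pow 2 d.le_succ) (Nat.dvd_of_mod_eq_zero h0))
        have hc2 : ¬ (t + 1) % 2 ^ (d + 1) = 2 ^ d := by
          intro h0
          apply hnd
          have hdm' := Nat.div_add_mod (t + 1) (2 ^ (d + 1))
          refine ⟨2 * ((t + 1) / 2 ^ (d + 1)) + 1, ?_⟩
          rw [Nat.mul_add, Nat.mul_one, ← mul_assoc, ← pow_succ]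
          omega
        rw [if_neg hc1, if_neg hc2]
        exact H2 t ht (fun hdd => hnd (dvd_trans (pow_dvd_pow 2 d.le_succ) hdd))
end

section
variable {α : Type*} (op : α → α → α) (a : ℕ → α)

lemma foldl_range_eq_seg (n : ℕ) :
    ((List.range n).map (fun j => some (a j))).foldl (liftOp op) none = seg op a 0 n := by
  induction n with
  | zero => rfl
  | succ n ih =>
      rw [List.range_succ, List.map_append, List.foldl_append, ih]
      simp [seg]


theorem blellochScan_correct' (hassoc : ∀ x y z, op (op x y) z = op x (op y z)) (m : ℕ) :
    ∀ i < 2 ^ m, (liftOp op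
      (downSweep op m
        (Function.update (upSweep op m (fun t => some (a t))) (2 ^ m - 1) none) i)
      (some (a i))) = ((List.range (i + 1)).map (fun j => some (a j))).foldl (liftOp op) none := by
  intro i hi
  have hmpos : 0 < 2 ^ m := Nat.pow_pos (by norm_num)
  have hdown : downSweep op m
      (Function.update (upSweep op m (fun t => some (a t))) (2 ^ m - 1) none) i
      = seg op a 0 i := by
    apply down_eval op a hassoc m m le_rfl _ _ _ i hi
    · intro t ht hdvd
      have hle : 2 ^ m ≤ t + 1 := Nat.le_of_dvd (by omega) hdvd
      have ht' : t = 2 ^ m - 1 := by omega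
      rw [ht', Function.update_self]
      have : 2 ^ m - 1 + 1 - 2 ^ m = 0 := by omega
      rw [this]
      rfl
    · intro t ht hnd
      have ht' : t ≠ 2 ^ m - 1 := by
        intro h
        exact hnd (h ▸ (by rw [show 2 ^ m - 1 + 1 = 2 ^ m by omega]))
      rw [Function.update_of_ne ht']
  rw [hdown, foldl_range_eq_seg op a (i + 1)]
  show _ = seg op a 0 (i + 1)
  rw [seg]
  rw [Nat.zero_add]
end


/-- **Correctness of the Blelloch parallel scan:** for an associative operator
`⊗` and an input sequence of length `n = 2^m`, the up-sweep followed by the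
down-sweep and a final combining pass computes the all-prefix-sums
`(a_1, a_1 ⊗ a_2, …, a_1 ⊗ ⋯ ⊗ a_n)`. -/
theorem blellochScan_correct {α : Type*} (op : α → α → α)
    (hassoc : ∀ x y z, op (op x y) z = op x (op y z))
    (m : ℕ) (a : ℕ → α) :
    ∀ i < 2 ^ m, blellochScan op m a i = inclusivePrefix op a i := by
  exact fun i hi => blellochScan_correct' op a hassoc m i hi
end
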